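/- Define Z_0(l_1,...,l_p) = (1/(2π)^p) ∫_{[-π,π]^p} det[ e^{i(l_j - l⁰_k)θ_j} - e^{i(l_j + l⁰_k)θ_j} ]_{j,k} dθ where 1 ≤ l⁰_1 < ... < l⁰_p and 1 ≤ l_1 < ... < l_p are positive integers. Then Z_0(l_1,...,l_p) = 1 if l_j = l⁰_j for all j, and 0 otherwise. -/

import Mathlib

open MeasureTheory Real Complex

lemma exp_I_int_pi (m : ℤ) : Complex.exp (Complex.I * m * Real.pi) = (-1 : ℂ) ^ m := by
  rw [mul_comm Complex.I (m : ℂ), mul_assoc, mul_comm Complex.I (Real.pi : ℂ),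
    Complex.exp_int_mul, Complex.exp_pi_mul_I]

lemma integral_exp_I_int (m : ℤ) :
    (∫ θ in Set.Icc (-Real.pi) Real.pi, Complex.exp (Complex.I * m * θ)) =
      if m = 0 then ((2 * Real.pi : ℝ) : ℂ) else 0 := by
  rw [MeasureTheory.integral_Icc_eq_integral_Ioc,
    ← intervalIntegral.integral_of_le (by linarith [Real.pi_pos] : -Real.pi ≤ Real.pi)]
  by_cases hm : m = 0
  · simp [hm, two_mul]
  · rw [if_neg hm]
    have := integral_exp_mul_complex (a := -Real.pi) (b := Real.pi)
      (c := Complex.I * m) (by simp [hm, Complex.I_ne_zero])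
    simp_rw [mul_assoc] at this ⊢
    rw [this]
    have h1 : Complex.exp (Complex.I * (m * (Real.pi : ℂ))) = (-1 : ℂ) ^ m := by
      rw [← mul_assoc]; exact exp_I_int_pi m
    have h2 : Complex.exp (Complex.I * (m * ((-Real.pi : ℝ) : ℂ))) = (-1 : ℂ) ^ m := by
      push_cast
      rw [show Complex.I * ((m : ℂ) * -(Real.pi : ℂ)) = Complex.I * ((-m : ℤ) : ℂ) * Real.pi by
        push_cast; ring]
      rw [exp_I_int_pi, zpow_neg, ← inv_zpow, inv_neg, inv_one]
    rw [h1, h2, sub_self, zero_div]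

lemma integral_entry (a b : ℤ) (hb : b ≠ 0) :
    (∫ θ in Set.Icc (-Real.pi) Real.pi,
        (Complex.exp (Complex.I * a * θ) - Complex.exp (Complex.I * b * θ))) =
      if a = 0 then ((2 * Real.pi : ℝ) : ℂ) else 0 := by
  have hint : ∀ m : ℤ, IntegrableOn (fun θ : ℝ => Complex.exp (Complex.I * m * θ))
      (Set.Icc (-Real.pi) Real.pi) := fun m =>
    (Continuous.integrableOn_Icc (by continuity))
  rw [MeasureTheory.integral_sub (hint a) (hint b), integral_exp_I_int, integral_exp_I_int,
    if_neg hb, sub_zero]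

lemma det_integral_swap (p : ℕ) (g : Fin p → Fin p → ℝ → ℂ) (hg : ∀ j k, Continuous (g j k)) :
    (∫ θ in Set.Icc (fun _ : Fin p => -Real.pi) (fun _ : Fin p => Real.pi),
        Matrix.det (Matrix.of fun j k : Fin p => g j k (θ j))) =
      Matrix.det (Matrix.of fun j k : Fin p =>
        ∫ x in Set.Icc (-Real.pi) Real.pi, g j k x) := by
  have hdet : ∀ (M : Matrix (Fin p) (Fin p) ℂ),
      M.det = ∑ σ : Equiv.Perm (Fin p), ((Equiv.Perm.sign σ : ℤ) : ℂ) * ∏ i, M i (σ i) := by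
    intro M
    rw [← Matrix.det_transpose, Matrix.det_apply']
    simp [Matrix.transpose_apply]
  simp_rw [hdet]
  have hS : MeasurableSet (Set.Icc (fun _ : Fin p => -Real.pi) (fun _ : Fin p => Real.pi)) :=
    measurableSet_Icc
  rw [MeasureTheory.integral_finset_sum]
  · refine Finset.sum_congr rfl fun σ _ => ?_
    rw [integral_const_mul]
    congr 1
    have key : (∫ θ in Set.Icc (fun _ : Fin p => -Real.pi) (fun _ : Fin p => Real.pi),
        ∏ i, (Matrix.of fun j k : Fin p => g j k (θ j)) i (σ i)) =
        ∏ i, ∫ x in Set.Icc (-Real.pi) Real.pi, g i (σ i) x := by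
      rw [← MeasureTheory.integral_indicator hS]
      have hind : (Set.Icc (fun _ : Fin p => -Real.pi) (fun _ : Fin p => Real.pi)).indicator
          (fun θ => ∏ i, (Matrix.of fun j k : Fin p => g j k (θ j)) i (σ i)) =
          fun θ => ∏ i, (Set.Icc (-Real.pi) Real.pi).indicator (g i (σ i)) (θ i) := by
        funext θ
        by_cases hθ : θ ∈ Set.Icc (fun _ : Fin p => -Real.pi) (fun _ : Fin p => Real.pi)
        · rw [Set.indicator_of_mem hθ]
          have : ∀ i, θ i ∈ Set.Icc (-Real.pi) Real.pi := by
            intro i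
            exact ⟨hθ.1 i, hθ.2 i⟩
          simp only [Matrix.of_apply]
          exact Finset.prod_congr rfl fun i _ => (Set.indicator_of_mem (this i) _).symm
        · rw [Set.indicator_of_notMem hθ]
          have : ∃ i, θ i ∉ Set.Icc (-Real.pi) Real.pi := by
            by_contra h
            push_neg at h
            exact hθ ⟨fun i => (h i).1, fun i => (h i).2⟩
          obtain ⟨i, hi⟩ := this
          symm
          apply Finset.prod_eq_zero (Finset.mem_univ i)
          exact Set.indicator_of_notMem hi _
      rw [hind]
      rw [MeasureTheory.integral_fintype_prod_volume_eq_prod (ι := Fin p)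
        (fun i x => (Set.Icc (-Real.pi) Real.pi).indicator (g i (σ i)) x)]
      exact Finset.prod_congr rfl fun i _ =>
        MeasureTheory.integral_indicator measurableSet_Icc
    rw [key]
    simp [Matrix.of_apply]
  · intro σ _
    apply Integrable.const_mul
    apply ContinuousOn.integrableOn_compact isCompact_Icc
    apply Continuous.continuousOn
    exact continuous_finset_prod _ fun i _ => (hg i (σ i)).comp (continuous_apply i)

lemma det_delta (p : ℕ) (l0 l : Fin p → ℤ) (hl0 : StrictMono l0) (hl : StrictMono l) :
    Matrix.det (Matrix.of fun j k : Fin p => if l j = l0 k then (1 : ℂ) else 0) =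
      if l = l0 then 1 else 0 := by
  by_cases h : l = l0
  · subst h
    rw [if_pos rfl]
    have : (Matrix.of fun j k : Fin p => if l j = l k then (1 : ℂ) else 0) = 1 := by
      ext j k
      simp [Matrix.one_apply, hl.injective.eq_iff]
    rw [this, Matrix.det_one]
  · rw [if_neg h, Matrix.det_apply']
    apply Finset.sum_eq_zero
    intro σ _
    have hex : ∃ i, l (σ i) ≠ l0 i := by
      by_contra hc
      push_neg at hc
      apply h
      have hσmono : StrictMono σ := fun a b hab =>
        hl.lt_iff_lt.mp (by rw [hc, hc]; exact hl0 hab)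
      have hid : ∀ i, σ i = i := by
        let e : Fin p ≃o Fin p := { toEquiv := σ, map_rel_iff' := fun {a b} => hσmono.le_iff_le }
        have he : e = OrderIso.refl (Fin p) := Subsingleton.elim _ _
        intro i
        have := congrArg (fun (x : Fin p ≃o Fin p) => x i) he
        simpa [e] using this
      funext i
      rw [← hc i, hid i]
    obtain ⟨i, hi⟩ := hex
    apply mul_eq_zero_of_right
    apply Finset.prod_eq_zero (Finset.mem_univ i)
    simp [Matrix.of_apply, hi]

/-- The multidimensional integral `Z_n(l_1,…,l_p)` of the paper, for fixed starting
positions `l0`. -/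
noncomputable def Zint (p : ℕ) (l0 : Fin p → ℤ) (n : ℕ) (l : Fin p → ℤ) : ℂ :=
  (1 / (2 * Real.pi) ^ p : ℂ) *
    ∫ θ in Set.Icc (fun _ : Fin p => -Real.pi) (fun _ : Fin p => Real.pi),
      (((∑ j, 2 * Real.cos (θ j)) ^ n : ℝ) : ℂ) *
        Matrix.det (Matrix.of fun j k : Fin p =>
          Complex.exp (Complex.I * ((l j - l0 k : ℤ) : ℂ) * ((θ j : ℝ) : ℂ)) -
            Complex.exp (Complex.I * ((l j + l0 k : ℤ) : ℂ) * ((θ j : ℝ) : ℂ)))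

/-- At `n = 0`, the integral formula reproduces the initial condition
`Z_0(l) = δ_{l, l⁰}`. -/
theorem Zint_zero_initial_condition (p : ℕ) (l0 l : Fin p → ℤ)
    (hl0 : StrictMono l0) (hl0pos : ∀ j, 1 ≤ l0 j)
    (hl : StrictMono l) (hlpos : ∀ j, 1 ≤ l j) :
    Zint p l0 0 l = if l = l0 then 1 else 0 := by
  unfold Zint
  simp only [pow_zero, Complex.ofReal_one, one_mul]
  set g : Fin p → Fin p → ℝ → ℂ := fun j k x =>
    Complex.exp (Complex.I * ((l j - l0 k : ℤ) : ℂ) * (x : ℂ)) -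
      Complex.exp (Complex.I * ((l j + l0 k : ℤ) : ℂ) * (x : ℂ)) with hgdef
  have hg : ∀ j k, Continuous (g j k) := by
    intro j k
    apply Continuous.sub <;> exact Complex.continuous_exp.comp (by continuity)
  rw [show (∫ θ in Set.Icc (fun _ : Fin p => -Real.pi) (fun _ : Fin p => Real.pi),
      Matrix.det (Matrix.of fun j k : Fin p =>
        Complex.exp (Complex.I * ((l j - l0 k : ℤ) : ℂ) * ((θ j : ℝ) : ℂ)) -
          Complex.exp (Complex.I * ((l j + l0 k : ℤ) : ℂ) * ((θ j : ℝ) : ℂ)))) =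
      ∫ θ in Set.Icc (fun _ : Fin p => -Real.pi) (fun _ : Fin p => Real.pi),
        Matrix.det (Matrix.of fun j k : Fin p => g j k (θ j)) from rfl]
  rw [det_integral_swap p g hg]
  have hentry : ∀ j k, (∫ x in Set.Icc (-Real.pi) Real.pi, g j k x) =
      if l j = l0 k then ((2 * Real.pi : ℝ) : ℂ) else 0 := by
    intro j k
    have hb : l j + l0 k ≠ 0 := by
      have := hlpos j; have := hl0pos k; omega
    have := integral_entry (l j - l0 k) (l j + l0 k) hb
    rw [hgdef]
    simp only [Int.cast_sub, Int.cast_add] at this ⊢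
    rw [this]
    congr 1
    simp [sub_eq_zero]
  have hM : (Matrix.of fun j k : Fin p => ∫ x in Set.Icc (-Real.pi) Real.pi, g j k x) =
      ((2 * Real.pi : ℝ) : ℂ) • Matrix.of (fun j k : Fin p => if l j = l0 k then (1 : ℂ) else 0) := by
    ext j k
    rw [Matrix.of_apply, hentry j k]
    simp only [Matrix.smul_apply, Matrix.of_apply, smul_eq_mul]
    split <;> simp
  rw [hM, Matrix.det_smul, det_delta p l0 l hl0 hl]
  have h2π : ((2 * Real.pi : ℝ) : ℂ) = 2 * (Real.pi : ℂ) := by push_cast; ring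
  rw [h2π]
  have hne : (2 * (Real.pi : ℂ)) ^ p ≠ 0 := by
    apply pow_ne_zero
    simp [Real.pi_ne_zero, Complex.ofReal_ne_zero]
  simp only [Fintype.card_fin]
  field_simp
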